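/- arXiv:2205.00442 — 2 statements merged into one kernel-verified Lean document; each statement's English description precedes it below -/
import Mathlib

section
/- Let (G, H, (g_v), (c_v), a) be a BNPG game with altruism in which G is the complete graph on a vertex set V of size |V| = n. Then the game admits a pure strategy Nash equilibrium if and only if at least one of the following holds: (i) the all-zero profile is a PSNE; (ii) the all-one profile is a PSNE; (iii) there exists an integer k with 0 < k < n such that |R₁(k)| ≥ k, |R₀(k)| ≥ n − k, and |R₀(k) \ R₁(k)| = |V \ R₁(k)|, where R₀(k) := {v ∈ V : Δg_v(k) + a·∑_{u∈N_v} Δg_u(k) ≤ c_v} and R₁(k) := {v ∈ V : Δg_v(k−1) + a·∑_{u∈N_v} Δg_u(k−1) ≥ c_v}. -/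
open Finset

/-- `Δg(t) = g(t+1) - g(t)`. -/
def dg (g : ℕ → ℝ) (t : ℕ) : ℝ := g (t + 1) - g t

/-- Number of `G`-neighbors of `v` playing 1 in the profile `x`. -/
def nv {W : Type*} [Fintype W] [DecidableEq W] (G : SimpleGraph W) [DecidableRel G.Adj]
    (x : W → Bool) (v : W) : ℕ :=
  ((G.neighborFinset v).filter (fun u => x u = true)).card

/-- Utility of player `v` in a BNPG game with altruism: input graph `G`,
altruistic (out-)neighborhoods `N`, externality functions `g`, costs `c`,
altruism parameter `a`. -/
def util {W : Type*} [Fintype W] [DecidableEq W] (G : SimpleGraph W) [DecidableRel G.Adj]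
    (N : W → Finset W) (g : W → ℕ → ℝ) (c : W → ℝ) (a : ℝ)
    (x : W → Bool) (v : W) : ℝ :=
  g v ((x v).toNat + nv G x v)
    + a * ∑ u ∈ N v, g u ((x u).toNat + nv G x u)
    - c v * (x v).toNat

/-- Pure strategy Nash equilibrium of a BNPG game with altruism. -/
def isPSNE {W : Type*} [Fintype W] [DecidableEq W] (G : SimpleGraph W) [DecidableRel G.Adj]
    (N : W → Finset W) (g : W → ℕ → ℝ) (c : W → ℝ) (a : ℝ) (x : W → Bool) : Prop :=
  ∀ v : W, ∀ b : Bool,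
    util G N g c a x v ≥ util G N g c a (Function.update x v b) v

open scoped Classical

section Helpers

variable {W : Type*} [Fintype W] [DecidableEq W]

lemma nbr_top (v : W) : (⊤ : SimpleGraph W).neighborFinset v = univ.erase v := by
  ext w
  simp [SimpleGraph.mem_neighborFinset, ne_comm]

lemma total_eq (x : W → Bool) (v : W) :
    (x v).toNat + nv (⊤ : SimpleGraph W) x v = (univ.filter (fun u => x u = true)).card := by
  unfold nv
  rw [nbr_top, filter_erase]
  cases hv : x v with
  | false =>
    rw [erase_eq_of_notMem (by simp [hv])]
    simp
  | true =>
    have hmem : v ∈ univ.filter (fun u => x u = true) := by simp [hv]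
    rw [card_erase_of_mem hmem]
    have := card_pos.mpr ⟨v, hmem⟩
    simp only [Bool.toNat, cond_true]
    omega

lemma util_eq (N : W → Finset W) (g : W → ℕ → ℝ) (c : W → ℝ) (a : ℝ)
    (x : W → Bool) (v : W) :
    util (⊤ : SimpleGraph W) N g c a x v =
      g v ((univ.filter (fun u => x u = true)).card)
        + a * ∑ u ∈ N v, g u ((univ.filter (fun u => x u = true)).card)
        - c v * (x v).toNat := by
  unfold util
  rw [total_eq]
  rw [Finset.sum_congr rfl (fun u _ => by rw [total_eq] :
    ∀ u ∈ N v, g u ((x u).toNat + nv (⊤ : SimpleGraph W) x u)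
      = g u ((univ.filter (fun u => x u = true)).card))]

lemma K_update_false (x : W → Bool) (v : W) (h : x v = true) :
    (univ.filter (fun u => Function.update x v false u = true)).card + 1
      = (univ.filter (fun u => x u = true)).card := by
  have hset : univ.filter (fun u => Function.update x v false u = true)
      = (univ.filter (fun u => x u = true)).erase v := by
    ext u
    by_cases hu : u = v <;> simp [Function.update_apply, hu, h]
  have hmem : v ∈ univ.filter (fun u => x u = true) := by simp [h]
  rw [hset, card_erase_of_mem hmem]
  have := card_pos.mpr ⟨v, hmem⟩
  omega

lemma K_update_true (x : W → Bool) (v : W) (h : x v = false) :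
    (univ.filter (fun u => Function.update x v true u = true)).card
      = (univ.filter (fun u => x u = true)).card + 1 := by
  have hset : univ.filter (fun u => Function.update x v true u = true)
      = insert v (univ.filter (fun u => x u = true)) := by
    ext u
    by_cases hu : u = v <;> simp [Function.update_apply, hu, h]
  have hnm : v ∉ univ.filter (fun u => x u = true) := by simp [h]
  rw [hset, card_insert_of_notMem hnm]

lemma psne_iff (N : W → Finset W) (g : W → ℕ → ℝ) (c : W → ℝ) (a : ℝ) (x : W → Bool) :
    isPSNE (⊤ : SimpleGraph W) N g c a x ↔ ∀ v : W,
      (x v = true → c v ≤ dg (g v) ((univ.filter (fun u => x u = true)).card - 1)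
          + a * ∑ u ∈ N v, dg (g u) ((univ.filter (fun u => x u = true)).card - 1)) ∧
      (x v = false → dg (g v) ((univ.filter (fun u => x u = true)).card)
          + a * ∑ u ∈ N v, dg (g u) ((univ.filter (fun u => x u = true)).card) ≤ c v) := by
  set K := (univ.filter (fun u => x u = true)).card with hK
  constructor
  · intro h v
    constructor
    · intro hv
      have h0 := h v false
      rw [util_eq, util_eq] at h0
      have hKu : (univ.filter (fun u => Function.update x v false u = true)).card = K - 1 := by
        have := K_update_false x v hv
        omega
      have hK1 : K - 1 + 1 = K := by
        have := K_update_false x v hv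
        omega
      rw [hKu] at h0
      simp only [Function.update_self, hv] at h0
      simp only [dg, hK1, Finset.sum_sub_distrib, mul_sub]
      simp only [Bool.toNat, cond_true, cond_false, Nat.cast_one, Nat.cast_zero,
        mul_one, mul_zero] at h0
      linarith
    · intro hv
      have h0 := h v true
      rw [util_eq, util_eq] at h0
      rw [K_update_true x v hv] at h0
      simp only [Function.update_self, hv] at h0
      simp only [dg, Finset.sum_sub_distrib, mul_sub]
      simp only [Bool.toNat, cond_true, cond_false, Nat.cast_one, Nat.cast_zero,
        mul_one, mul_zero] at h0
      linarith
  · intro h v b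
    by_cases hb : b = x v
    · rw [hb, Function.update_eq_self]
    · cases hv : x v with
      | true =>
        have hb' : b = false := by cases b <;> simp_all
        subst hb'
        have h1 := (h v).1 hv
        rw [ge_iff_le, util_eq, util_eq]
        have hKu : (univ.filter (fun u => Function.update x v false u = true)).card = K - 1 := by
          have := K_update_false x v hv
          omega
        have hK1 : K - 1 + 1 = K := by
          have := K_update_false x v hv
          omega
        rw [hKu]
        simp only [Function.update_self, hv]
        simp only [dg, hK1, Finset.sum_sub_distrib, mul_sub] at h1
        simp only [Bool.toNat, cond_true, cond_false, Nat.cast_one, Nat.cast_zero,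
          mul_one, mul_zero]
        linarith
      | false =>
        have hb' : b = true := by cases b <;> simp_all
        subst hb'
        have h1 := (h v).2 hv
        rw [ge_iff_le, util_eq, util_eq]
        rw [K_update_true x v hv]
        simp only [Function.update_self, hv]
        simp only [dg, Finset.sum_sub_distrib, mul_sub] at h1
        simp only [Bool.toNat, cond_true, cond_false, Nat.cast_one, Nat.cast_zero,
          mul_one, mul_zero]
        linarith

end Helpers

/-- on the complete graph, a BNPG game with altruism admits a PSNE iff
the all-zero profile is a PSNE, or the all-one profile is a PSNE, or there is `k`
with `0 < k < n` such that `|R₁(k)| ≥ k`, `|R₀(k)| ≥ n − k` and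
`|R₀(k) \ R₁(k)| = |V \ R₁(k)|`. -/
theorem statement3 {W : Type*} [Fintype W] [DecidableEq W]
    (N : W → Finset W) (hN : ∀ v : W, ∀ u ∈ N v, (⊤ : SimpleGraph W).Adj v u)
    (g : W → ℕ → ℝ) (hmono : ∀ v, Monotone (g v)) (hnn : ∀ v t, 0 ≤ g v t)
    (c : W → ℝ) (hc : ∀ v, 0 ≤ c v) (a : ℝ) (ha : 0 ≤ a)
    (n : ℕ) (hn : Fintype.card W = n) :
    (∃ x : W → Bool, isPSNE ⊤ N g c a x) ↔
      (isPSNE ⊤ N g c a (fun _ => false) ∨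
       isPSNE ⊤ N g c a (fun _ => true) ∨
       ∃ k : ℕ, 0 < k ∧ k < n ∧
        k ≤ (Finset.univ.filter (fun v : W =>
                c v ≤ dg (g v) (k - 1) + a * ∑ u ∈ N v, dg (g u) (k - 1))).card ∧
        n - k ≤ (Finset.univ.filter (fun v : W =>
                dg (g v) k + a * ∑ u ∈ N v, dg (g u) k ≤ c v)).card ∧
        ((Finset.univ.filter (fun v : W =>
                dg (g v) k + a * ∑ u ∈ N v, dg (g u) k ≤ c v)) \
            (Finset.univ.filter (fun v : W =>
                c v ≤ dg (g v) (k - 1) + a * ∑ u ∈ N v, dg (g u) (k - 1)))).card =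
          (Finset.univ \ (Finset.univ.filter (fun v : W =>
                c v ≤ dg (g v) (k - 1) + a * ∑ u ∈ N v, dg (g u) (k - 1)))).card) := by
  constructor
  · rintro ⟨x, hx⟩
    set K := (univ.filter (fun u => x u = true)).card with hKdef
    rw [psne_iff] at hx
    by_cases hK0 : K = 0
    · left
      have hxf : x = fun _ => false := by
        funext v
        by_contra hv
        have hvt : x v = true := by cases h : x v <;> simp_all
        have : v ∈ univ.filter (fun u => x u = true) := by simp [hvt]
        have h0 : (univ.filter (fun u => x u = true)).card = 0 := by rw [← hKdef]; exact hK0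
        simp [Finset.card_eq_zero.mp h0] at this
      rw [← hxf]
      rw [psne_iff]
      exact hx
    by_cases hKn : K = n
    · right; left
      have hxt : x = fun _ => true := by
        have hsub : univ.filter (fun u => x u = true) = univ :=
          Finset.eq_univ_of_card _ (by rw [← hKdef, hKn, hn])
        funext v
        have : v ∈ univ.filter (fun u => x u = true) := by rw [hsub]; exact mem_univ v
        simpa using this
      rw [← hxt]
      rw [psne_iff]
      exact hx
    · right; right
      refine ⟨K, Nat.pos_of_ne_zero hK0, ?_, ?_, ?_, ?_⟩
      · have hKle : K ≤ n := by
          have h1 : K ≤ Fintype.card W := card_le_univ _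
          omega
        omega
      · -- K ≤ |R₁|
        apply Finset.card_le_card
        intro v hv
        have hvt : x v = true := (mem_filter.mp hv).2
        simp only [mem_filter, mem_univ, true_and]
        exact (hx v).1 hvt
      · -- n - K ≤ |R₀|
        have : univ \ univ.filter (fun u => x u = true) ⊆
            univ.filter (fun v : W => dg (g v) K + a * ∑ u ∈ N v, dg (g u) K ≤ c v) := by
          intro v hv
          have hvf : x v = false := by
            rcases mem_sdiff.mp hv with ⟨-, hv2⟩
            cases h : x v
            · rfl
            · exact absurd (by simp [h]) hv2
          simp only [mem_filter, mem_univ, true_and]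
          exact (hx v).2 hvf
        have hcard := Finset.card_le_card this
        rw [Finset.card_sdiff_of_subset (by simp)] at hcard
        simp only [card_univ, hn, ← hKdef] at hcard
        exact hcard
      · -- card equality
        congr 1
        apply Finset.Subset.antisymm
        · intro v hv
          exact mem_sdiff.mpr ⟨mem_univ v, (mem_sdiff.mp hv).2⟩
        · intro v hv
          rcases mem_sdiff.mp hv with ⟨-, hv2⟩
          refine mem_sdiff.mpr ⟨?_, hv2⟩
          have hvf : x v = false := by
            cases h : x v
            · rfl
            · exact absurd (by simpa using (hx v).1 h) hv2
          simp only [mem_filter, mem_univ, true_and]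
          exact (hx v).2 hvf
  · rintro (h | h | ⟨k, hk0, hkn, hR1, hR0, hcard⟩)
    · exact ⟨_, h⟩
    · exact ⟨_, h⟩
    · set R1 := (Finset.univ.filter (fun v : W =>
          c v ≤ dg (g v) (k - 1) + a * ∑ u ∈ N v, dg (g u) (k - 1))) with hR1def
      set R0 := (Finset.univ.filter (fun v : W =>
          dg (g v) k + a * ∑ u ∈ N v, dg (g u) k ≤ c v)) with hR0def
      have hsets : univ \ R1 = R0 \ R1 := by
        apply (Finset.eq_of_subset_of_card_le
          (fun v hv => mem_sdiff.mpr ⟨mem_univ v, (mem_sdiff.mp hv).2⟩) (le_of_eq hcard.symm)).symm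
      have hsub0 : univ \ R1 ⊆ R0 := by
        rw [hsets]; exact sdiff_subset
      have hc1 : (univ \ R1).card ≤ n - k := by
        rw [Finset.card_sdiff_of_subset (subset_univ _), card_univ, hn]
        omega
      obtain ⟨T, hTsub, hTR0, hTcard⟩ :=
        Finset.exists_subsuperset_card_eq hsub0 hc1 hR0
      set x : W → Bool := fun v => decide (v ∉ T) with hxdef
      have hxT : ∀ v, x v = true ↔ v ∉ T := by intro v; simp [hxdef]
      have hfilter : univ.filter (fun u => x u = true) = univ \ T := by
        ext v
        simp [hxT v]
      have hKx : (univ.filter (fun u => x u = true)).card = k := by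
        rw [hfilter, Finset.card_sdiff_of_subset (subset_univ _), card_univ, hn, hTcard]
        omega
      refine ⟨x, ?_⟩
      rw [psne_iff]
      intro v
      rw [hKx]
      constructor
      · intro hv
        have hvT : v ∉ T := (hxT v).mp hv
        have : v ∈ R1 := by
          by_contra hvR1
          exact hvT (hTsub (mem_sdiff.mpr ⟨mem_univ v, hvR1⟩))
        simpa [hR1def] using this
      · intro hv
        have hvT : v ∈ T := by
          by_contra hvT
          simp [hxdef, hvT] at hv
        have : v ∈ R0 := hTR0 hvT
        simpa [hR0def] using this
end

section
/- Let (G, H, (g_v), (c_v), a) be a BNPG game with asymmetric altruism on a connected graph G = (V, E), let T = (V, E₁) be a spanning tree of G, let E'' := E \ E₁, and let V' ⊆ V be the set of endpoints of edges of E''. Let E₂ := {(u,v) ∈ E' : {u,v} ∈ E₁} and, for each v, let N'_v be its out-neighbors in (V, E₂). Fix a profile x* = (x*_v)_{v∈V} ∈ {0,1}^V with G-neighbor counts (n*_v)_{v∈V}, and for v ∈ V' let n^t_v be the number of neighbors of v in (V, E'') playing 1 under x*. Define g^t_v(x) := g_v(x + n^t_v) for v ∈ V' and g^t_v := g_v otherwise;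 define c^s_v := c_v − a·∑_{u ∈ N_v \ N'_v} Δg_u(x*_u + n*_u − 1) if v ∈ V' and x*_v = 1, c^s_v := c_v − a·∑_{u ∈ N_v \ N'_v} Δg_u(x*_u + n*_u) if v ∈ V' and x*_v = 0, and c^s_v := c_v otherwise. Then x* is a pure strategy Nash equilibrium of (G, H, (g_v), (c_v), a) if and only if x* is a pure strategy Nash equilibrium of (T, (V,E₂), (g^t_v), (c^s_v), a). -/
open Finset

set_option maxHeartbeats 1000000
section Helpers
variable {W : Type*} [Fintype W] [DecidableEq W]

lemma filter_update_of_not_mem (s : Finset W) (x : W → Bool) (v : W) (b : Bool) (hv : v ∉ s) :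
    s.filter (fun u => Function.update x v b u = true) = s.filter (fun u => x u = true) := by
  apply Finset.filter_congr
  intro u hu
  rw [Function.update_of_ne (by rintro rfl; exact hv hu)]

lemma card_filter_update_of_mem (s : Finset W) (x : W → Bool) (v : W) (b : Bool) (hv : v ∈ s) :
    (s.filter (fun u => Function.update x v b u = true)).card
      = ((s.erase v).filter (fun u => x u = true)).card + b.toNat := by
  conv_lhs => rw [← Finset.insert_erase hv]
  rw [Finset.filter_insert,
    filter_update_of_not_mem (s.erase v) x v b (Finset.notMem_erase v s)]
  cases b
  · simp
  · rw [if_pos (by simp), Finset.card_insert_of_notMem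
      (fun h => Finset.notMem_erase v s (Finset.mem_filter.mp h).1)]
    simp

lemma card_filter_of_mem (s : Finset W) (x : W → Bool) (v : W) (hv : v ∈ s) :
    (s.filter (fun u => x u = true)).card
      = ((s.erase v).filter (fun u => x u = true)).card + (x v).toNat := by
  have h := card_filter_update_of_mem s x v (x v) hv
  simpa [Function.update_eq_self] using h

lemma nv_update_self (G : SimpleGraph W) [DecidableRel G.Adj] (x : W → Bool) (v : W) (b : Bool) :
    nv G (Function.update x v b) v = nv G x v := by
  unfold nv
  rw [filter_update_of_not_mem _ x v b (SimpleGraph.notMem_neighborFinset_self G v)]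

lemma nv_update_adj (G : SimpleGraph W) [DecidableRel G.Adj] (x : W → Bool) {v u : W}
    (b : Bool) (h : G.Adj v u) :
    nv G (Function.update x v b) u
      = (((G.neighborFinset u).erase v).filter (fun w => x w = true)).card + b.toNat := by
  unfold nv
  exact card_filter_update_of_mem _ x v b (by rw [SimpleGraph.mem_neighborFinset]; exact h.symm)

lemma nv_adj (G : SimpleGraph W) [DecidableRel G.Adj] (x : W → Bool) {v u : W} (h : G.Adj v u) :
    nv G x u = (((G.neighborFinset u).erase v).filter (fun w => x w = true)).card + (x v).toNat := by
  unfold nv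
  exact card_filter_of_mem _ x v (by rw [SimpleGraph.mem_neighborFinset]; exact h.symm)

lemma nv_split (G T : SimpleGraph W) [DecidableRel G.Adj] [DecidableRel T.Adj]
    (hTG : T ≤ G) (x : W → Bool) (v : W) :
    nv G x v = nv T x v
      + (Finset.univ.filter (fun u : W => G.Adj v u ∧ ¬ T.Adj v u ∧ x u = true)).card := by
  have hdisj : Disjoint ((T.neighborFinset v).filter (fun u => x u = true))
      (Finset.univ.filter (fun u : W => G.Adj v u ∧ ¬ T.Adj v u ∧ x u = true)) := by
    rw [Finset.disjoint_left]
    intro u hu hu'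
    simp only [Finset.mem_filter, SimpleGraph.mem_neighborFinset, Finset.mem_univ, true_and] at hu hu'
    exact hu'.2.1 hu.1
  have hunion : (G.neighborFinset v).filter (fun u => x u = true)
      = (T.neighborFinset v).filter (fun u => x u = true)
        ∪ Finset.univ.filter (fun u : W => G.Adj v u ∧ ¬ T.Adj v u ∧ x u = true) := by
    ext u
    simp only [Finset.mem_filter, SimpleGraph.mem_neighborFinset, Finset.mem_union,
      Finset.mem_univ, true_and]
    constructor
    · rintro ⟨hadj, hx⟩
      by_cases hT : T.Adj v u
      · exact Or.inl ⟨hT, hx⟩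
      · exact Or.inr ⟨hadj, hT, hx⟩
    · rintro (⟨hT, hx⟩ | ⟨hadj, _, hx⟩)
      · exact ⟨hTG hT, hx⟩
      · exact ⟨hadj, hx⟩
  unfold nv
  rw [hunion, Finset.card_union_of_disjoint hdisj]

lemma tc_update (G T : SimpleGraph W) [DecidableRel G.Adj] [DecidableRel T.Adj]
    (x : W → Bool) {v u : W} (b : Bool) (hT : T.Adj v u) :
    Finset.univ.filter (fun w : W => G.Adj u w ∧ ¬ T.Adj u w ∧ Function.update x v b w = true)
      = Finset.univ.filter (fun w : W => G.Adj u w ∧ ¬ T.Adj u w ∧ x w = true) := by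
  apply Finset.filter_congr
  intro w _
  by_cases hw : w = v
  · subst hw
    simp [hT.symm]
  · rw [Function.update_of_ne hw]

lemma key_diff (G : SimpleGraph W) [DecidableRel G.Adj]
    (T : SimpleGraph W) [DecidableRel T.Adj] (hTG : T ≤ G)
    (N : W → Finset W) (hN : ∀ v : W, ∀ u ∈ N v, G.Adj v u)
    (g : W → ℕ → ℝ) (c : W → ℝ) (a : ℝ) (x : W → Bool) (v : W) (b : Bool) :
    util G N g c a x v - util G N g c a (Function.update x v b) v
      = util T (fun v => (N v).filter (fun u => T.Adj v u))
          (fun v t => g v (t +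
            (Finset.univ.filter (fun u : W => G.Adj v u ∧ ¬ T.Adj v u ∧ x u = true)).card))
          (fun v => c v - a * ∑ u ∈ (N v).filter (fun u => ¬ T.Adj v u),
            (if x v = true then dg (g u) ((x u).toNat + nv G x u - 1)
             else dg (g u) ((x u).toNat + nv G x u)))
          a x v
        - util T (fun v => (N v).filter (fun u => T.Adj v u))
          (fun v t => g v (t +
            (Finset.univ.filter (fun u : W => G.Adj v u ∧ ¬ T.Adj v u ∧ x u = true)).card))
          (fun v => c v - a * ∑ u ∈ (N v).filter (fun u => ¬ T.Adj v u),
            (if x v = true then dg (g u) ((x u).toNat + nv G x u - 1)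
             else dg (g u) ((x u).toNat + nv G x u)))
          a (Function.update x v b) v := by
  by_cases hbv : b = x v
  · subst hbv
    rw [Function.update_eq_self]
    simp
  -- abbreviations
  set tc : W → ℕ := fun u =>
    (Finset.univ.filter (fun w : W => G.Adj u w ∧ ¬ T.Adj u w ∧ x w = true)).card with htc
  set x' : W → Bool := Function.update x v b with hx'
  have hx'v : x' v = b := Function.update_self v b x
  have hx'u : ∀ u ∈ N v, x' u = x u := fun u hu =>
    Function.update_of_ne ((G.ne_of_adj (hN v u hu)).symm) b x
  have hGv' : nv G x' v = nv G x v := nv_update_self G x v b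
  have hTv' : nv T x' v = nv T x v := nv_update_self T x v b
  have harg : ∀ (u : W) (y : ℕ), y + nv T x u + tc u = y + nv G x u := by
    intro u y
    rw [nv_split G T hTG x u]
    simp only [htc]
    omega
  have harg' : ∀ u ∈ (N v).filter (fun u => T.Adj v u),
      ∀ y : ℕ, y + nv T x' u + tc u = y + nv G x' u := by
    intro u hu y
    have hT : T.Adj v u := (Finset.mem_filter.mp hu).2
    rw [nv_split G T hTG x' u, hx', tc_update G T x b hT]
    simp only [htc]
    omega
  -- expand the four utilities
  have e1 : util G N g c a x v
      = g v ((x v).toNat + nv G x v)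
        + a * ∑ u ∈ N v, g u ((x u).toNat + nv G x u)
        - c v * (x v).toNat := rfl
  have hsumG : ∑ u ∈ N v, g u ((x' u).toNat + nv G x' u)
      = ∑ u ∈ N v, g u ((x u).toNat + nv G x' u) :=
    Finset.sum_congr rfl fun u hu => by rw [hx'u u hu]
  have e2 : util G N g c a x' v
      = g v (b.toNat + nv G x v)
        + a * ∑ u ∈ N v, g u ((x u).toNat + nv G x' u)
        - c v * b.toNat := by
    unfold util
    rw [hx'v, hGv', hsumG]
  have hsumT1 : ∑ u ∈ (N v).filter (fun u => T.Adj v u), g u ((x u).toNat + nv T x u + tc u)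
      = ∑ u ∈ (N v).filter (fun u => T.Adj v u), g u ((x u).toNat + nv G x u) :=
    Finset.sum_congr rfl fun u _ => by rw [harg u ((x u).toNat)]
  have hsumT2 : ∑ u ∈ (N v).filter (fun u => T.Adj v u), g u ((x' u).toNat + nv T x' u + tc u)
      = ∑ u ∈ (N v).filter (fun u => T.Adj v u), g u ((x u).toNat + nv G x' u) := by
    refine Finset.sum_congr rfl fun u hu => ?_
    rw [hx'u u (Finset.mem_filter.mp hu).1, harg' u hu ((x u).toNat)]
  have t1 : util T (fun v => (N v).filter (fun u => T.Adj v u))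
        (fun v t => g v (t + tc v))
        (fun v => c v - a * ∑ u ∈ (N v).filter (fun u => ¬ T.Adj v u),
          (if x v = true then dg (g u) ((x u).toNat + nv G x u - 1)
           else dg (g u) ((x u).toNat + nv G x u)))
        a x v
      = g v ((x v).toNat + nv G x v)
        + a * ∑ u ∈ (N v).filter (fun u => T.Adj v u), g u ((x u).toNat + nv G x u)
        - (c v - a * ∑ u ∈ (N v).filter (fun u => ¬ T.Adj v u),
            (if x v = true then dg (g u) ((x u).toNat + nv G x u - 1)
             else dg (g u) ((x u).toNat + nv G x u))) * (x v).toNat := by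
    unfold util
    dsimp only
    rw [harg v ((x v).toNat), hsumT1]
  have t2 : util T (fun v => (N v).filter (fun u => T.Adj v u))
        (fun v t => g v (t + tc v))
        (fun v => c v - a * ∑ u ∈ (N v).filter (fun u => ¬ T.Adj v u),
          (if x v = true then dg (g u) ((x u).toNat + nv G x u - 1)
           else dg (g u) ((x u).toNat + nv G x u)))
        a x' v
      = g v (b.toNat + nv G x v)
        + a * ∑ u ∈ (N v).filter (fun u => T.Adj v u), g u ((x u).toNat + nv G x' u)
        - (c v - a * ∑ u ∈ (N v).filter (fun u => ¬ T.Adj v u),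
            (if x v = true then dg (g u) ((x u).toNat + nv G x u - 1)
             else dg (g u) ((x u).toNat + nv G x u))) * b.toNat := by
    unfold util
    dsimp only
    rw [hx'v, hTv', harg v (b.toNat), hsumT2]
  have hsplit1 : ∑ u ∈ (N v).filter (fun u => T.Adj v u), g u ((x u).toNat + nv G x u)
      + ∑ u ∈ (N v).filter (fun u => ¬ T.Adj v u), g u ((x u).toNat + nv G x u)
      = ∑ u ∈ N v, g u ((x u).toNat + nv G x u) :=
    Finset.sum_filter_add_sum_filter_not (N v) (fun u => T.Adj v u) _
  have hsplit2 : ∑ u ∈ (N v).filter (fun u => T.Adj v u), g u ((x u).toNat + nv G x' u)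
      + ∑ u ∈ (N v).filter (fun u => ¬ T.Adj v u), g u ((x u).toNat + nv G x' u)
      = ∑ u ∈ N v, g u ((x u).toNat + nv G x' u) :=
    Finset.sum_filter_add_sum_filter_not (N v) (fun u => T.Adj v u) _
  rw [e1, e2, t1, t2, ← hsplit1, ← hsplit2]
  rcases Bool.eq_false_or_eq_true (x v) with hxv | hxv
  · -- x v = true, so b = false
    have hb : b = false := by
      cases b
      · rfl
      · exact absurd hxv.symm hbv
    subst hb
    have hBB : ∑ u ∈ (N v).filter (fun u => ¬ T.Adj v u), g u ((x u).toNat + nv G x u)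
        - ∑ u ∈ (N v).filter (fun u => ¬ T.Adj v u), g u ((x u).toNat + nv G x' u)
        = ∑ u ∈ (N v).filter (fun u => ¬ T.Adj v u),
            dg (g u) ((x u).toNat + nv G x u - 1) := by
      rw [← Finset.sum_sub_distrib]
      refine Finset.sum_congr rfl fun u hu => ?_
      have hadj : G.Adj v u := hN v u (Finset.mem_filter.mp hu).1
      have h1 : nv G x u
          = (((G.neighborFinset u).erase v).filter (fun w => x w = true)).card + 1 := by
        rw [nv_adj G x hadj, hxv]
        rfl
      have h2 : nv G x' u
          = (((G.neighborFinset u).erase v).filter (fun w => x w = true)).card + 0 := by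
        rw [hx', nv_update_adj G x false hadj]
        rfl
      set m := (((G.neighborFinset u).erase v).filter (fun w => x w = true)).card with hm
      rw [h1, h2, dg]
      rw [show (x u).toNat + (m + 1) - 1 = (x u).toNat + m from by omega,
        show (x u).toNat + (m + 1) = (x u).toNat + m + 1 from by omega,
        show (x u).toNat + (m + 0) = (x u).toNat + m from by omega]
    have hmul : a * ∑ u ∈ (N v).filter (fun u => ¬ T.Adj v u), g u ((x u).toNat + nv G x u)
        - a * ∑ u ∈ (N v).filter (fun u => ¬ T.Adj v u), g u ((x u).toNat + nv G x' u)
        = a * ∑ u ∈ (N v).filter (fun u => ¬ T.Adj v u),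
            dg (g u) ((x u).toNat + nv G x u - 1) := by
      rw [← mul_sub, hBB]
    simp only [hxv, eq_self_iff_true, if_true, Bool.toNat_true, Bool.toNat_false]
    push_cast
    linarith [hmul]
  · -- x v = false, so b = true
    have hb : b = true := by
      cases b
      · exact absurd hxv.symm hbv
      · rfl
    subst hb
    have hBB : ∑ u ∈ (N v).filter (fun u => ¬ T.Adj v u), g u ((x u).toNat + nv G x u)
        - ∑ u ∈ (N v).filter (fun u => ¬ T.Adj v u), g u ((x u).toNat + nv G x' u)
        = - ∑ u ∈ (N v).filter (fun u => ¬ T.Adj v u),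
            dg (g u) ((x u).toNat + nv G x u) := by
      rw [← Finset.sum_sub_distrib, ← Finset.sum_neg_distrib]
      refine Finset.sum_congr rfl fun u hu => ?_
      have hadj : G.Adj v u := hN v u (Finset.mem_filter.mp hu).1
      have h1 : nv G x u
          = (((G.neighborFinset u).erase v).filter (fun w => x w = true)).card + 0 := by
        rw [nv_adj G x hadj, hxv]
        rfl
      have h2 : nv G x' u
          = (((G.neighborFinset u).erase v).filter (fun w => x w = true)).card + 1 := by
        rw [hx', nv_update_adj G x true hadj]
        rfl
      set m := (((G.neighborFinset u).erase v).filter (fun w => x w = true)).card with hm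
      rw [h1, h2, dg]
      rw [show (x u).toNat + (m + 0) = (x u).toNat + m from by omega,
        show (x u).toNat + (m + 1) = (x u).toNat + m + 1 from by omega]
      ring
    have hmul : a * ∑ u ∈ (N v).filter (fun u => ¬ T.Adj v u), g u ((x u).toNat + nv G x u)
        - a * ∑ u ∈ (N v).filter (fun u => ¬ T.Adj v u), g u ((x u).toNat + nv G x' u)
        = - (a * ∑ u ∈ (N v).filter (fun u => ¬ T.Adj v u),
            dg (g u) ((x u).toNat + nv G x u)) := by
      rw [← mul_sub, hBB, mul_neg]
    simp only [hxv, Bool.false_eq_true, if_false, Bool.toNat_true, Bool.toNat_false]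
    push_cast
    linarith [hmul]

end Helpers

/-- let `T` be a spanning tree of the connected input network `G`,
let `N` be the (asymmetric) altruistic network, and fix a profile `x`. Replace the
externality function of each `v` by `g^t_v(t) = g_v(t + n^t_v)` where `n^t_v` is the
number of non-tree `G`-neighbors of `v` playing 1 in `x`; restrict the altruistic
edges to tree edges; and replace the cost of each `v` by
`c_v − a·∑_{u ∈ N_v \ N'_v} Δg_u(x_u + n_u − 1)` if `x_v = 1`, respectively
`c_v − a·∑_{u ∈ N_v \ N'_v} Δg_u(x_u + n_u)` if `x_v = 0`. Then `x` is a PSNE of the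
game on `G` iff `x` is a PSNE of the modified game on `T`. -/
theorem statement13 {W : Type*} [Fintype W] [DecidableEq W]
    (G : SimpleGraph W) [DecidableRel G.Adj] (hconn : G.Connected)
    (T : SimpleGraph W) [DecidableRel T.Adj] (hTG : T ≤ G) (hTree : T.IsTree)
    (N : W → Finset W) (hN : ∀ v : W, ∀ u ∈ N v, G.Adj v u)
    (g : W → ℕ → ℝ) (hmono : ∀ v, Monotone (g v)) (hnn : ∀ v t, 0 ≤ g v t)
    (c : W → ℝ) (hc : ∀ v, 0 ≤ c v) (a : ℝ) (ha : 0 ≤ a)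
    (x : W → Bool) :
    isPSNE G N g c a x ↔
      isPSNE T (fun v => (N v).filter (fun u => T.Adj v u))
        (fun v t => g v (t +
          (Finset.univ.filter (fun u : W => G.Adj v u ∧ ¬ T.Adj v u ∧ x u = true)).card))
        (fun v => c v - a * ∑ u ∈ (N v).filter (fun u => ¬ T.Adj v u),
          (if x v = true then dg (g u) ((x u).toNat + nv G x u - 1)
           else dg (g u) ((x u).toNat + nv G x u)))
        a x := by
  constructor
  · intro h v b
    have h1 := h v b
    have h2 := key_diff G T hTG N hN g c a x v b
    rw [ge_iff_le, ← sub_nonneg] at h1 ⊢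
    linarith
  · intro h v b
    have h1 := h v b
    have h2 := key_diff G T hTG N hN g c a x v b
    rw [ge_iff_le, ← sub_nonneg] at h1 ⊢
    linarith
end
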